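/- arXiv:1407.5520 — 2 statements merged into one kernel-verified Lean document; each statement's English description precedes it below -/
import Mathlib

section
/- Let H be a finite-dimensional real Hilbert space and r ∈ ℕ. Let α, γ > 0, β > 1, c_F ≥ 0, and let F : ℝ × H → H be continuous and satisfy, for all t ≥ 0: ‖F(t,x)‖ ≤ α‖x‖^β whenever ‖x‖ ≥ c_F, and ‖F(t,x) − F(t,y)‖ ≤ γ·max(‖x‖,‖y‖)^{β−1}·‖x − y‖ whenever ‖x‖ ≥ c_F and ‖y‖ ≥ c_F. Fix w ∈ H with ‖w‖ > c_F, fix ρ with 0 < ρ < γ/α, set η = ρα/(γ − ρα), and assume η ≤ 1 − c_F/‖w‖. Let a ≥ 0, k = (1/(2γ^β))·ρ·(γ − ρα)^{β−1}·‖w‖^{1−β}, and κ = η‖w‖. Suppose U is an H-valued polynomial of degree at most r such that ‖U(t) − w‖ ≤ κ for all t ∈ [a, a+k] and ∫_a^{a+k} ⟨U'(t), V(t)⟩ dt + ⟨U(a) − w, V(a)⟩ = ∫_a^{a+k} ⟨F(t, U(t)), V(t)⟩ dt for every H-valued polynomial V of degree at most r. Then ‖U(a+k)‖ ≤ (1 +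 ρα·(ργ^β + (γ − ρα)^β)/(2·γ^β·(γ − ρα)))·‖w‖. -/
open MeasureTheory Set
open scoped RealInnerProductSpace

/-- `U : ℝ → X` is an `X`-valued polynomial of degree at most `r`. -/
def IsXPoly {X : Type*} [NormedAddCommGroup X] [NormedSpace ℝ X]
    (r : ℕ) (U : ℝ → X) : Prop :=
  ∃ c : ℕ → X, ∀ t : ℝ, U t = ∑ i ∈ Finset.range (r + 1), t ^ i • c i

theorem isXPoly_const {X : Type*} [NormedAddCommGroup X] [NormedSpace ℝ X]
    (r : ℕ) (z : X) : IsXPoly r (fun _ : ℝ => z) := by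
  refine ⟨fun i => if i = 0 then z else 0, fun t => ?_⟩
  rw [Finset.sum_eq_single 0]
  · simp
  · intro i _ hi; simp [hi]
  · simp

theorem isXPoly_deriv {H : Type*} [NormedAddCommGroup H] [InnerProductSpace ℝ H]
    (r : ℕ) (U : ℝ → H) (hU : IsXPoly r U) :
    ∃ D : ℝ → H, Continuous D ∧ ∀ t, HasDerivAt U (D t) t := by
  obtain ⟨c, hc⟩ := hU
  refine ⟨fun t => ∑ i ∈ Finset.range (r + 1), ((i : ℝ) * t ^ (i - 1)) • c i, by fun_prop, ?_⟩
  intro t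
  have : HasDerivAt (fun t : ℝ => ∑ i ∈ Finset.range (r + 1), t ^ i • c i)
      (∑ i ∈ Finset.range (r + 1), ((i : ℝ) * t ^ (i - 1)) • c i) t :=
    HasDerivAt.fun_sum fun i _ => (hasDerivAt_pow i t).smul_const (c i)
  exact (funext hc : U = _) ▸ this

/-- One-step upper growth estimate (equation (geo3), Remark 5.3) for the dG
scheme with the adaptive time step `k = (2γ^β)⁻¹ ρ (γ−ρα)^{β−1} ‖w‖^{1−β}`. -/
theorem dG_one_step_upper_growth
    {H : Type*} [NormedAddCommGroup H] [InnerProductSpace ℝ H]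
    [FiniteDimensional ℝ H]
    (r : ℕ) (α γ β c_F : ℝ)
    (hα : 0 < α) (hγ : 0 < γ) (hβ : 1 < β) (hcF : 0 ≤ c_F)
    (F : ℝ → H → H) (hFcont : Continuous fun p : ℝ × H => F p.1 p.2)
    (hgrowth : ∀ t : ℝ, 0 ≤ t → ∀ x : H, c_F ≤ ‖x‖ → ‖F t x‖ ≤ α * ‖x‖ ^ β)
    (hLip : ∀ t : ℝ, 0 ≤ t → ∀ x y : H, c_F ≤ ‖x‖ → c_F ≤ ‖y‖ →
      ‖F t x - F t y‖ ≤ γ * max ‖x‖ ‖y‖ ^ (β - 1) * ‖x - y‖)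
    (w : H) (hw : c_F < ‖w‖)
    (ρ : ℝ) (hρ0 : 0 < ρ) (hργ : ρ < γ / α)
    (η : ℝ) (hη : η = ρ * α / (γ - ρ * α)) (hη1 : η ≤ 1 - c_F / ‖w‖)
    (a : ℝ) (ha : 0 ≤ a)
    (k : ℝ) (hk : k = 1 / (2 * γ ^ β) * ρ * (γ - ρ * α) ^ (β - 1) * ‖w‖ ^ (1 - β))
    (κ : ℝ) (hκ : κ = η * ‖w‖)
    (U : ℝ → H) (hU : IsXPoly r U)
    (hUB : ∀ t ∈ Set.Icc a (a + k), ‖U t - w‖ ≤ κ)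
    (hweak : ∀ V : ℝ → H, IsXPoly r V →
      (∫ t in a..(a + k), ⟪deriv U t, V t⟫) + ⟪U a - w, V a⟫ =
        ∫ t in a..(a + k), ⟪F t (U t), V t⟫) :
    ‖U (a + k)‖ ≤
      (1 + ρ * α * (ρ * γ ^ β + (γ - ρ * α) ^ β) /
        (2 * γ ^ β * (γ - ρ * α))) * ‖w‖ := by
  have hA0 : 0 < γ - ρ * α := by
    have h1 : ρ * α < γ := (lt_div_iff₀ hα).mp hργ
    linarith
  have hW0 : (0 : ℝ) < ‖w‖ := lt_of_le_of_lt hcF hw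
  have hη0 : 0 ≤ η := by rw [hη]; positivity
  have hκ0 : 0 ≤ κ := by rw [hκ]; positivity
  have hγβ : (0 : ℝ) < γ ^ β := Real.rpow_pos_of_pos hγ β
  have hAβ1 : (0 : ℝ) < (γ - ρ * α) ^ (β - 1) := Real.rpow_pos_of_pos hA0 _
  have hγβ1 : (0 : ℝ) < γ ^ (β - 1) := Real.rpow_pos_of_pos hγ _
  have hWβ1 : (0 : ℝ) < ‖w‖ ^ (β - 1) := Real.rpow_pos_of_pos hW0 _
  have hk0 : 0 < k := by
    rw [hk]
    have h2 : (0:ℝ) < ‖w‖ ^ (1 - β) := Real.rpow_pos_of_pos hW0 _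
    positivity
  set z : H := U (a + k) with hz
  obtain ⟨D, hDcont, hD⟩ := isXPoly_deriv r U hU
  have hderiv : deriv U = D := funext fun t => (hD t).deriv
  have hw1 := hweak (fun _ => z) (isXPoly_const r z)
  have hFTC : (∫ t in a..(a + k), ⟪deriv U t, z⟫) = ⟪z, z⟫ - ⟪U a, z⟫ := by
    rw [hderiv]
    have h := intervalIntegral.integral_eq_sub_of_hasDerivAt
      (f := fun t => ⟪U t, z⟫) (f' := fun t => ⟪D t, z⟫) (a := a) (b := a + k)
      (fun t _ => by simpa using (hD t).inner ℝ (hasDerivAt_const t z))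
      (((hDcont.inner continuous_const)).intervalIntegrable a (a + k))
    simpa [hz] using h
  rw [hFTC, inner_sub_left] at hw1
  have hkey : ⟪z, z⟫ = ⟪w, z⟫ + ∫ t in a..(a + k), ⟪F t (U t), z⟫ := by
    linarith [hw1]
  set M : ℝ := γ * ((1 + η) * ‖w‖) ^ (β - 1) * κ + α * ‖w‖ ^ β with hM
  have hβ1 : (0 : ℝ) ≤ β - 1 := by linarith
  have hFb : ∀ t ∈ Set.Icc a (a + k), ‖F t (U t)‖ ≤ M := by
    intro t ht
    have ht0 : 0 ≤ t := le_trans ha ht.1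
    have hUtw : ‖U t - w‖ ≤ κ := hUB t ht
    have hUup : ‖U t‖ ≤ (1 + η) * ‖w‖ := by
      have h1 := norm_sub_norm_le (U t) w
      rw [hκ] at hUtw
      have h5 : (1 + η) * ‖w‖ = ‖w‖ + η * ‖w‖ := by ring
      linarith
    have hUlo : c_F ≤ ‖U t‖ := by
      have h1 := norm_sub_norm_le w (U t)
      rw [norm_sub_rev] at h1
      have h3 : c_F / ‖w‖ * ‖w‖ = c_F := div_mul_cancel₀ _ (ne_of_gt hW0)
      have h4 := mul_le_mul_of_nonneg_right hη1 hW0.le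
      rw [hκ] at hUtw
      have h5 : (1 - c_F / ‖w‖) * ‖w‖ = ‖w‖ - c_F / ‖w‖ * ‖w‖ := by ring
      linarith
    have hmax : max ‖U t‖ ‖w‖ ≤ (1 + η) * ‖w‖ := by
      apply max_le hUup
      have h5 : (1 + η) * ‖w‖ = ‖w‖ + η * ‖w‖ := by ring
      have h6 : 0 ≤ η * ‖w‖ := mul_nonneg hη0 (norm_nonneg w)
      linarith
    have hmaxpow : max ‖U t‖ ‖w‖ ^ (β - 1) ≤ ((1 + η) * ‖w‖) ^ (β - 1) :=
      Real.rpow_le_rpow (le_max_of_le_right (norm_nonneg w)) hmax hβ1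
    have hlip := hLip t ht0 (U t) w hUlo hw.le
    have hgr := hgrowth t ht0 w hw.le
    calc ‖F t (U t)‖ ≤ ‖F t (U t) - F t w‖ + ‖F t w‖ := by
          simpa using norm_add_le (F t (U t) - F t w) (F t w)
      _ ≤ γ * max ‖U t‖ ‖w‖ ^ (β - 1) * ‖U t - w‖ + α * ‖w‖ ^ β := add_le_add hlip hgr
      _ ≤ γ * ((1 + η) * ‖w‖) ^ (β - 1) * κ + α * ‖w‖ ^ β := by
          have h1 : (0:ℝ) ≤ max ‖U t‖ ‖w‖ ^ (β - 1) :=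
            Real.rpow_nonneg (le_max_of_le_right (norm_nonneg w)) _
          gcongr
      _ = M := rfl
  have hM0 : 0 ≤ M := le_trans (norm_nonneg _) (hFb a ⟨le_refl a, by linarith⟩)
  have hIb : (∫ t in a..(a + k), ⟪F t (U t), z⟫) ≤ M * ‖z‖ * k := by
    have h := intervalIntegral.norm_integral_le_of_norm_le_const
      (f := fun t => ⟪F t (U t), z⟫) (a := a) (b := a + k) (C := M * ‖z‖) ?_
    · rw [show a + k - a = k by ring, abs_of_pos hk0] at h
      calc (∫ t in a..(a + k), ⟪F t (U t), z⟫) ≤ ‖∫ t in a..(a + k), ⟪F t (U t), z⟫‖ :=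
            le_abs_self _
        _ ≤ M * ‖z‖ * k := h
    · intro t ht
      rw [Set.uIoc_of_le (by linarith)] at ht
      have ht' : t ∈ Set.Icc a (a + k) := ⟨ht.1.le, ht.2⟩
      calc ‖⟪F t (U t), z⟫‖ ≤ ‖F t (U t)‖ * ‖z‖ := norm_inner_le_norm _ _
        _ ≤ M * ‖z‖ := by gcongr; exact hFb t ht'
  have hzz : ‖z‖ ^ 2 ≤ (‖w‖ + M * k) * ‖z‖ := by
    have h1 : ⟪w, z⟫ ≤ ‖w‖ * ‖z‖ := real_inner_le_norm w z
    have h2 : ⟪z, z⟫ = ‖z‖ ^ 2 := real_inner_self_eq_norm_sq z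
    have h3 : (‖w‖ + M * k) * ‖z‖ = ‖w‖ * ‖z‖ + M * ‖z‖ * k := by ring
    rw [← h2, hkey, h3]
    linarith [hIb]
  -- algebraic identity M * k = coeff * ‖w‖
  have h1η : 1 + η = γ / (γ - ρ * α) := by
    rw [hη]; field_simp; ring
  have e1 : ((1 + η) * ‖w‖) ^ (β - 1)
      = γ ^ (β - 1) / (γ - ρ * α) ^ (β - 1) * ‖w‖ ^ (β - 1) := by
    rw [h1η, Real.mul_rpow (by positivity) hW0.le, Real.div_rpow hγ.le hA0.le]
  have e2 : γ ^ β = γ * γ ^ (β - 1) := by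
    nth_rewrite 1 [show β = 1 + (β - 1) by ring]
    rw [Real.rpow_add hγ, Real.rpow_one]
  have e3 : (γ - ρ * α) ^ β = (γ - ρ * α) * (γ - ρ * α) ^ (β - 1) := by
    nth_rewrite 1 [show β = 1 + (β - 1) by ring]
    rw [Real.rpow_add hA0, Real.rpow_one]
  have e4 : ‖w‖ ^ β = ‖w‖ * ‖w‖ ^ (β - 1) := by
    nth_rewrite 1 [show β = 1 + (β - 1) by ring]
    rw [Real.rpow_add hW0, Real.rpow_one]
  have e5 : ‖w‖ ^ (1 - β) = (‖w‖ ^ (β - 1))⁻¹ := by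
    rw [show (1 - β) = -(β - 1) by ring, Real.rpow_neg hW0.le]
  have halg : M * k = ρ * α * (ρ * γ ^ β + (γ - ρ * α) ^ β) /
      (2 * γ ^ β * (γ - ρ * α)) * ‖w‖ := by
    rw [hM, hk, hκ, e1, e2, e3, e4, e5, hη]
    field_simp
  have hfinal : ‖w‖ + M * k = (1 + ρ * α * (ρ * γ ^ β + (γ - ρ * α) ^ β) /
      (2 * γ ^ β * (γ - ρ * α))) * ‖w‖ := by
    rw [halg]; ring
  have hc0 : 0 ≤ ρ * α * (ρ * γ ^ β + (γ - ρ * α) ^ β) /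
      (2 * γ ^ β * (γ - ρ * α)) := by
    have hAβ : (0:ℝ) ≤ (γ - ρ * α) ^ β := (Real.rpow_pos_of_pos hA0 β).le
    apply div_nonneg
    · exact mul_nonneg (by positivity) (add_nonneg (by positivity) hAβ)
    · exact mul_nonneg (by positivity) hA0.le
  rcases eq_or_lt_of_le (norm_nonneg z) with h0 | h0
  · rw [← h0]
    exact mul_nonneg (by linarith) (norm_nonneg w)
  · have h3 : ‖z‖ * ‖z‖ ≤ (‖w‖ + M * k) * ‖z‖ := by rw [← sq]; exact hzz
    have h4 : ‖z‖ ≤ ‖w‖ + M * k := le_of_mul_le_mul_right h3 h0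
    exact le_of_le_of_eq h4 hfinal
end

section
/- Let H be a real inner product space, let M > 0, and let x, y ∈ H satisfy ‖x‖ ≤ M < ‖y‖. Then ‖x/M − y/‖y‖‖² ≤ ‖x − y‖² / (M·‖y‖); in particular ‖x/M − y/‖y‖‖² ≤ ‖x − y‖² / M². -/
open scoped RealInnerProductSpace

/-- The mixed-case inner-product estimate from the proof of Appendix
Lemma A.1 (case `‖x‖ ≤ M < ‖y‖`). -/
theorem mixed_case_projection_estimate
    {H : Type*} [NormedAddCommGroup H] [InnerProductSpace ℝ H]
    (M : ℝ) (hM : 0 < M) (x y : H) (hx : ‖x‖ ≤ M) (hy : M < ‖y‖) :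
    ‖M⁻¹ • x - ‖y‖⁻¹ • y‖ ^ 2 ≤ ‖x - y‖ ^ 2 / (M * ‖y‖) ∧
      ‖M⁻¹ • x - ‖y‖⁻¹ • y‖ ^ 2 ≤ ‖x - y‖ ^ 2 / M ^ 2 := by
  have hb : (0:ℝ) < ‖y‖ := lt_trans hM hy
  have hxn : (0:ℝ) ≤ ‖x‖ := norm_nonneg x
  have e1 : ‖M⁻¹ • x - ‖y‖⁻¹ • y‖ ^ 2
      = ‖x‖^2 / M^2 + 1 - 2 * ⟪x, y⟫ / (M * ‖y‖) := by
    rw [@norm_sub_sq_real, norm_smul, norm_smul, real_inner_smul_left,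
      real_inner_smul_right]
    simp [abs_of_pos hM, abs_of_pos hb, mul_pow]
    field_simp
    ring
  have e2 : ‖x - y‖ ^ 2 = ‖x‖^2 + ‖y‖^2 - 2 * ⟪x, y⟫ := by
    rw [@norm_sub_sq_real]; ring
  have h1 : ‖M⁻¹ • x - ‖y‖⁻¹ • y‖ ^ 2 ≤ ‖x - y‖ ^ 2 / (M * ‖y‖) := by
    rw [e1, e2, le_div_iff₀ (by positivity)]
    have key : (0:ℝ) ≤ (‖y‖ - M) * (‖y‖ * M - ‖x‖^2) := by
      apply mul_nonneg (by linarith)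
      nlinarith
    have hMne : M ≠ 0 := ne_of_gt hM
    have hbne : ‖y‖ ≠ 0 := ne_of_gt hb
    field_simp
    nlinarith [mul_nonneg (mul_nonneg (mul_pos hM hb).le hM.le) key]
  refine ⟨h1, le_trans h1 ?_⟩
  apply div_le_div_of_nonneg_left (by positivity) (by positivity)
  nlinarith
end
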